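/- Fix integers 3 ≤ l < r and ρ ∈ [0,1]. Define α^BEC(ρ,η) = max_{(0,x_c,y)∈D(ρ)} [f(0,x_c,y,ρ) − 2η ρ x_c], the maximum being over points of D(ρ) with first coordinate x₀ = 0. If for η = 0 this maximum is achieved only at the point (0,x_c,y) = (0,0,0), then there exists η̃ < 0 such that α^BEC(ρ,η) = 0 for all η > η̃. -/

import Mathlib

open Finset

noncomputable section

/-- Binary entropy in nats, with the convention `0 * log 0 = 0`
(automatic since `Real.log 0 = 0`). -/
def h2 (x : ℝ) : ℝ := -x * Real.log x - (1 - x) * Real.log (1 - x)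

/-- Membership in the domain `D(ρ) ⊆ [0,1]^{2+⌊r/2⌋}`.  The coordinate `y t`
for `t : Fin (r/2)` represents `y_{t+1}`, the fraction of check nodes of
induced degree `2*(t+1)`. -/
def memD (r : ℕ) (ρ x₀ xc : ℝ) (y : Fin (r / 2) → ℝ) : Prop :=
  x₀ ∈ Set.Icc (0 : ℝ) 1 ∧ xc ∈ Set.Icc (0 : ℝ) 1 ∧ (∀ t, y t ∈ Set.Icc (0 : ℝ) 1) ∧
    (∑ t, y t) ≤ 1 ∧
    (∑ t : Fin (r / 2), (2 * ((t : ℕ) + 1) : ℝ) / (r : ℝ) * y t) = (1 - ρ) * x₀ + ρ * xc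

/-- The growth-rate function `f(x₀, x_c, y, ρ)`. -/
def fFun (l r : ℕ) (x₀ xc : ℝ) (y : Fin (r / 2) → ℝ) (ρ : ℝ) : ℝ :=
  -(l : ℝ) * h2 ((1 - ρ) * x₀ + ρ * xc) + (1 - ρ) * h2 x₀ + ρ * h2 xc
    - (l : ℝ) / (r : ℝ) * ((1 - ∑ t, y t) * Real.log (1 - ∑ t, y t))
    - (l : ℝ) / (r : ℝ) * ∑ t, y t * Real.log (y t)
    + (l : ℝ) / (r : ℝ) *
        ∑ t : Fin (r / 2), y t * Real.log (Nat.choose r (2 * ((t : ℕ) + 1)))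

lemma h2_zero : h2 0 = 0 := by simp [h2]

def C0 (l r : ℕ) : ℝ := 1 + l + (l : ℝ) * r / 2 * Real.log 2

lemma C0_pos (l r : ℕ) : 0 < C0 l r := by
  have h2 : (0:ℝ) ≤ (l : ℝ) * r / 2 * Real.log 2 := by
    have := Real.log_nonneg (by norm_num : (1:ℝ) ≤ 2)
    positivity
  have : (0:ℝ) ≤ l := Nat.cast_nonneg l
  unfold C0; linarith

lemma f000 (l r : ℕ) (ρ : ℝ) : fFun l r 0 0 0 ρ = 0 := by
  simp [fFun, h2]

lemma aux1 (u : ℝ) (h1 : u ≤ 1) : -((1 - u) * Real.log (1 - u)) ≤ u := by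
  rcases eq_or_lt_of_le h1 with h | h
  · simp [h]
  · set v : ℝ := 1 - u with hv
    have hv0 : 0 < v := by simp [hv]; linarith
    have h := Real.log_le_sub_one_of_pos (show (0:ℝ) < 1 / v by positivity)
    rw [one_div, Real.log_inv] at h
    have h2 := mul_le_mul_of_nonneg_left h hv0.le
    rw [mul_sub, mul_inv_cancel₀ hv0.ne'] at h2
    nlinarith

lemma aux2 (y s : ℝ) (hy : 0 ≤ y) (hs : 0 < s) :
    -(y * Real.log y) ≤ (s - y) + y * (-Real.log s) := by
  rcases eq_or_lt_of_le hy with h | h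
  · simp [← h]; linarith
  · have hlog := Real.log_le_sub_one_of_pos (show (0:ℝ) < s / y by positivity)
    rw [Real.log_div hs.ne' h.ne'] at hlog
    have h2 := mul_le_mul_of_nonneg_left hlog h.le
    have h3 : y * (s / y) = s := by field_simp
    nlinarith [h2, h3]

lemma aux3 (r k : ℕ) : Real.log (Nat.choose r k) ≤ (r : ℝ) * Real.log 2 := by
  have hle : (Nat.choose r k : ℝ) ≤ (2 : ℝ) ^ r := by
    have : Nat.choose r k ≤ 2 ^ r := by
      by_cases hk : k ≤ r
      · calc Nat.choose r k ≤ ∑ i ∈ Finset.range (r + 1), Nat.choose r i :=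
              Finset.single_le_sum (fun i _ => Nat.zero_le _)
                (Finset.mem_range.2 (Nat.lt_succ_of_le hk))
          _ = 2 ^ r := Nat.sum_range_choose r
      · rw [Nat.choose_eq_zero_of_lt (lt_of_not_ge hk)]; exact Nat.zero_le _
    exact_mod_cast this
  rcases Nat.eq_zero_or_pos (Nat.choose r k) with h | h
  · rw [h]
    simp only [Nat.cast_zero, Real.log_zero]
    positivity
  · calc Real.log (Nat.choose r k) ≤ Real.log ((2:ℝ) ^ r) :=
        Real.log_le_log (by exact_mod_cast h) hle
      _ = (r : ℝ) * Real.log 2 := Real.log_pow 2 r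

set_option maxHeartbeats 2000000 in
lemma f_small (l r : ℕ) (hl : 3 ≤ l) (hlr : l < r) (ρ xc : ℝ) (y : Fin (r / 2) → ℝ)
    (hρ0 : 0 < ρ) (hρ1 : ρ ≤ 1) (hD : memD r ρ 0 xc y)
    (hs : ρ * xc ≤ Real.exp (-(4 * C0 l r))) :
    fFun l r 0 xc y ρ ≤ -(C0 l r) * (ρ * xc) := by
  obtain ⟨-, hxc, hy, hY1, hsum⟩ := hD
  obtain ⟨hxc0, hxc1⟩ := hxc
  have hrn : 0 < r := by omega
  have hr0 : (0:ℝ) < r := by exact_mod_cast hrn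
  have hrne : (r:ℝ) ≠ 0 := hr0.ne'
  have hC0 := C0_pos l r
  obtain ⟨s, hsdef⟩ : ∃ s : ℝ, s = ρ * xc := ⟨_, rfl⟩
  rw [← hsdef] at hs ⊢
  have hsum' : (∑ t : Fin (r / 2), (2 * ((t : ℕ) + 1) : ℝ) / (r : ℝ) * y t) = s := by
    rw [hsum, hsdef]; ring
  have hs0 : 0 ≤ s := hsdef ▸ mul_nonneg hρ0.le hxc0
  rcases eq_or_lt_of_le hs0 with hs0' | hs0'
  · -- s = 0 : then xc = 0 and y = 0
    have hxceq : xc = 0 := by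
      rcases mul_eq_zero.1 (hsdef ▸ hs0'.symm) with h | h
      · exact absurd h hρ0.ne'
      · exact h
    have hy0 : y = 0 := by
      funext t
      have hz : ∀ i ∈ (Finset.univ : Finset (Fin (r/2))),
          (0:ℝ) ≤ (2 * ((i : ℕ) + 1) : ℝ) / (r : ℝ) * y i := by
        intro i _
        have h1 := (hy i).1
        positivity
      have h2 := (Finset.sum_eq_zero_iff_of_nonneg hz).1 (by rw [hsum', ← hs0']) t
        (Finset.mem_univ t)
      have ha : (2 * ((t : ℕ) + 1) : ℝ) / (r : ℝ) ≠ 0 := by positivity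
      simpa using (mul_eq_zero.1 h2).resolve_left ha
    rw [hxceq, hy0, f000, ← hs0']
    norm_num
  · -- 0 < s
    obtain ⟨L, hLdef⟩ : ∃ L : ℝ, L = -Real.log s := ⟨_, rfl⟩
    have hL4 : 4 * C0 l r ≤ L := by
      have hlg := Real.log_le_log hs0' hs
      rw [Real.log_exp] at hlg
      rw [hLdef]; linarith
    have hL0 : 0 ≤ L := by linarith
    have hs1 : s ≤ 1 := by nlinarith [hsdef]
    have hsxc : s ≤ xc := by nlinarith [hsdef]
    have hxcpos : 0 < xc := lt_of_lt_of_le hs0' hsxc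
    obtain ⟨Y, hYdef⟩ : ∃ Y : ℝ, Y = ∑ t, y t := ⟨_, rfl⟩
    rw [← hYdef] at hY1
    have hY0 : 0 ≤ Y := hYdef ▸ Finset.sum_nonneg fun t _ => (hy t).1
    have hYs : Y ≤ (r:ℝ)/2 * s := by
      have step : ∀ t : Fin (r/2),
          y t ≤ (r:ℝ)/2 * ((2 * ((t:ℕ)+1) : ℝ)/(r:ℝ) * y t) := by
        intro t
        have e : (r:ℝ)/2 * ((2 * ((t:ℕ)+1) : ℝ)/(r:ℝ) * y t) = (((t:ℕ):ℝ)+1) * y t := by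
          field_simp
        rw [e]
        have ht0 : (0:ℝ) ≤ ((t:ℕ):ℝ) := Nat.cast_nonneg _
        nlinarith [(hy t).1]
      rw [hYdef]
      calc (∑ t, y t) ≤ ∑ t : Fin (r/2), (r:ℝ)/2 * ((2 * ((t:ℕ)+1):ℝ)/(r:ℝ) * y t) :=
            Finset.sum_le_sum fun t _ => step t
        _ = (r:ℝ)/2 * s := by rw [← Finset.mul_sum, hsum']
    have hl0 : (0:ℝ) ≤ l := Nat.cast_nonneg l
    have hA : -(l:ℝ) * h2 s ≤ -((l:ℝ) * (s * L)) := by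
      have h1s : (0:ℝ) ≤ 1 - s := by linarith
      have hlog1s : Real.log (1 - s) ≤ 0 := Real.log_nonpos (by linarith) (by linarith)
      have hpos : 0 ≤ (l:ℝ) * ((1-s) * (-Real.log (1-s))) :=
        mul_nonneg hl0 (mul_nonneg h1s (neg_nonneg.2 hlog1s))
      unfold h2
      rw [hLdef]
      nlinarith [hpos]
    have hB : ρ * h2 xc ≤ s * L + s := by
      have haux := aux1 xc hxc1
      have hlogs := Real.log_le_log hs0' hsxc
      have hb1 : s * Real.log s ≤ s * Real.log xc := mul_le_mul_of_nonneg_left hlogs hs0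
      have hb2 : ρ * (-((1 - xc) * Real.log (1 - xc))) ≤ ρ * xc :=
        mul_le_mul_of_nonneg_left haux hρ0.le
      have e2 : ρ * (xc * Real.log xc) = s * Real.log xc := by rw [hsdef]; ring
      unfold h2
      rw [hLdef]
      nlinarith [hb1, hb2, e2, hsdef]
    have hlr' : (0:ℝ) ≤ (l:ℝ)/(r:ℝ) := by positivity
    have hC : -((l:ℝ)/(r:ℝ) * ((1 - Y) * Real.log (1 - Y))) ≤ (l:ℝ)/2 * s := by
      have haux := aux1 Y hY1
      have h1 : (l:ℝ)/(r:ℝ) * (-((1-Y) * Real.log (1-Y))) ≤ (l:ℝ)/(r:ℝ) * Y :=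
        mul_le_mul_of_nonneg_left haux hlr'
      have h2 : (l:ℝ)/(r:ℝ) * Y ≤ (l:ℝ)/(r:ℝ) * ((r:ℝ)/2 * s) :=
        mul_le_mul_of_nonneg_left hYs hlr'
      have e : (l:ℝ)/(r:ℝ) * ((r:ℝ)/2 * s) = (l:ℝ)/2 * s := by field_simp
      linarith
    have hD2 : -((l:ℝ)/(r:ℝ) * ∑ t, y t * Real.log (y t)) ≤
        (l:ℝ)/2 * s + (l:ℝ)/2 * (s * L) := by
      have hsum2 : ∑ t, -(y t * Real.log (y t)) ≤ ∑ t, ((s - y t) + y t * L) :=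
        Finset.sum_le_sum fun t _ => hLdef ▸ aux2 (y t) s (hy t).1 hs0'
      have e1 : ∑ t : Fin (r/2), ((s - y t) + y t * L) = (↑(r/2) : ℝ) * s - Y + Y * L := by
        rw [hYdef, Finset.sum_add_distrib, Finset.sum_sub_distrib, Finset.sum_const,
          Finset.card_univ, Fintype.card_fin, ← Finset.sum_mul, nsmul_eq_mul]
      have e0 : ∑ t, -(y t * Real.log (y t)) = -∑ t, y t * Real.log (y t) :=
        Finset.sum_neg_distrib _
      have hn : (↑(r/2) : ℝ) ≤ (r:ℝ)/2 := Nat.cast_div_le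
      have hms := mul_le_mul_of_nonneg_right hn hs0
      have hYL : Y * L ≤ ((r:ℝ)/2 * s) * L := mul_le_mul_of_nonneg_right hYs hL0
      have h1 : -∑ t, y t * Real.log (y t) ≤ (r:ℝ)/2 * s + (r:ℝ)/2 * s * L := by
        rw [← e0]
        calc ∑ t, -(y t * Real.log (y t)) ≤ ∑ t, ((s - y t) + y t * L) := hsum2
          _ = (↑(r/2) : ℝ) * s - Y + Y * L := e1
          _ ≤ (r:ℝ)/2 * s + (r:ℝ)/2 * s * L := by nlinarith [hms, hYL, hY0]
      have h2 := mul_le_mul_of_nonneg_left h1 hlr'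
      have e : (l:ℝ)/(r:ℝ) * ((r:ℝ)/2 * s + (r:ℝ)/2 * s * L) =
          (l:ℝ)/2 * s + (l:ℝ)/2 * (s * L) := by field_simp
      calc -((l:ℝ)/(r:ℝ) * ∑ t, y t * Real.log (y t)) =
            (l:ℝ)/(r:ℝ) * (-∑ t, y t * Real.log (y t)) := by ring
        _ ≤ (l:ℝ)/(r:ℝ) * ((r:ℝ)/2 * s + (r:ℝ)/2 * s * L) := h2
        _ = (l:ℝ)/2 * s + (l:ℝ)/2 * (s * L) := e
    have hE : (l:ℝ)/(r:ℝ) * ∑ t : Fin (r/2), y t * Real.log (Nat.choose r (2*((t:ℕ)+1))) ≤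
        (l:ℝ) * (r:ℝ)/2 * Real.log 2 * s := by
      have hlog2 : (0:ℝ) ≤ Real.log 2 := Real.log_nonneg one_le_two
      have h1 : ∑ t : Fin (r/2), y t * Real.log (Nat.choose r (2*((t:ℕ)+1))) ≤
          Y * ((r:ℝ) * Real.log 2) := by
        rw [hYdef]
        calc ∑ t : Fin (r/2), y t * Real.log (Nat.choose r (2*((t:ℕ)+1))) ≤
              ∑ t : Fin (r/2), y t * ((r:ℝ) * Real.log 2) :=
            Finset.sum_le_sum fun t _ => mul_le_mul_of_nonneg_left (aux3 r _) (hy t).1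
          _ = (∑ t : Fin (r/2), y t) * ((r:ℝ) * Real.log 2) := by rw [Finset.sum_mul]
      have h2 : Y * ((r:ℝ) * Real.log 2) ≤ ((r:ℝ)/2 * s) * ((r:ℝ) * Real.log 2) :=
        mul_le_mul_of_nonneg_right hYs (by positivity)
      have h3 := mul_le_mul_of_nonneg_left (le_trans h1 h2) hlr'
      have e : (l:ℝ)/(r:ℝ) * (((r:ℝ)/2 * s) * ((r:ℝ) * Real.log 2)) =
          (l:ℝ) * (r:ℝ)/2 * Real.log 2 * s := by field_simp
      linarith
    have hl3 : (3:ℝ) ≤ l := by exact_mod_cast hl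
    have hq0 : 0 ≤ s * L := mul_nonneg hs0 hL0
    have key : 2 * (C0 l r * s) ≤ ((l:ℝ)/2 - 1) * (s * L) := by
      have k1 : s * (4 * C0 l r) ≤ s * L := mul_le_mul_of_nonneg_left hL4 hs0
      calc 2 * (C0 l r * s) = (1/2) * (s * (4 * C0 l r)) := by ring
        _ ≤ (1/2) * (s * L) := by linarith
        _ ≤ ((l:ℝ)/2 - 1) * (s * L) := mul_le_mul_of_nonneg_right (by linarith) hq0
    unfold fFun
    rw [h2_zero, ← hsdef, ← hYdef]
    have e1 : (1 - ρ) * 0 + s = s := by ring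
    rw [e1]
    simp only [C0] at key ⊢
    linarith [hA, hB, hC, hD2, hE, key]

lemma h2_cont : Continuous h2 := by
  have hml := Real.continuous_mul_log
  have : h2 = fun x : ℝ => -(x * Real.log x) - ((1 - x) * Real.log (1 - x)) := by
    funext x; unfold h2; ring
  rw [this]
  exact (hml.neg).sub (hml.comp (continuous_const.sub continuous_id))

lemma fFun_cont (l r : ℕ) (ρ : ℝ) :
    Continuous (fun p : ℝ × (Fin (r / 2) → ℝ) => fFun l r 0 p.1 p.2 ρ) := by
  have hml := Real.continuous_mul_log
  have hsumY : Continuous (fun p : ℝ × (Fin (r / 2) → ℝ) => ∑ t, p.2 t) :=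
    continuous_finset_sum _ fun t _ => (continuous_apply t).comp continuous_snd
  unfold fFun
  apply Continuous.add
  apply Continuous.sub
  apply Continuous.sub
  · apply Continuous.add
    apply Continuous.add
    · exact continuous_const.mul (h2_cont.comp
        (continuous_const.add (continuous_const.mul continuous_fst)))
    · exact continuous_const
    · exact continuous_const.mul (h2_cont.comp continuous_fst)
  · exact continuous_const.mul (hml.comp (continuous_const.sub hsumY))
  · exact continuous_const.mul (continuous_finset_sum _ fun t _ =>
      hml.comp ((continuous_apply t).comp continuous_snd))
  · exact continuous_const.mul (continuous_finset_sum _ fun t _ =>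
      ((continuous_apply t).comp continuous_snd).mul continuous_const)

lemma region2 (l r : ℕ) (ρ : ℝ) (hρ0 : 0 ≤ ρ) (hρ1 : ρ ≤ 1) (δ : ℝ) (hδ : 0 < δ)
    (hmax : ∀ (xc : ℝ) (y : Fin (r / 2) → ℝ), memD r ρ 0 xc y →
      ¬(xc = 0 ∧ y = 0) → fFun l r 0 xc y ρ < fFun l r 0 0 0 ρ) :
    ∃ m : ℝ, 0 < m ∧ ∀ (xc : ℝ) (y : Fin (r / 2) → ℝ), memD r ρ 0 xc y →
      δ ≤ ρ * xc → fFun l r 0 xc y ρ ≤ -m := by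
  classical
  set T : Set (ℝ × (Fin (r / 2) → ℝ)) :=
    {p | memD r ρ 0 p.1 p.2 ∧ δ ≤ ρ * p.1} with hT
  rcases T.eq_empty_or_nonempty with hTe | hTne
  · refine ⟨1, one_pos, fun xc y h1 h2 => ?_⟩
    exact absurd (show (xc, y) ∈ T from ⟨h1, h2⟩) (by rw [hTe]; exact Set.notMem_empty _)
  · have hTcl : IsClosed T := by
      have c1 : IsClosed {p : ℝ × (Fin (r / 2) → ℝ) | p.1 ∈ Set.Icc (0:ℝ) 1} :=
        isClosed_Icc.preimage continuous_fst
      have c2 : IsClosed {p : ℝ × (Fin (r / 2) → ℝ) | ∀ t, p.2 t ∈ Set.Icc (0:ℝ) 1} := by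
        have : {p : ℝ × (Fin (r / 2) → ℝ) | ∀ t, p.2 t ∈ Set.Icc (0:ℝ) 1} =
            ⋂ t, {p : ℝ × (Fin (r / 2) → ℝ) | p.2 t ∈ Set.Icc (0:ℝ) 1} := by
          ext p; simp
        rw [this]
        exact isClosed_iInter fun t =>
          isClosed_Icc.preimage ((continuous_apply t).comp continuous_snd)
      have hsumY : Continuous (fun p : ℝ × (Fin (r / 2) → ℝ) => ∑ t, p.2 t) :=
        continuous_finset_sum _ fun t _ => (continuous_apply t).comp continuous_snd
      have c3 : IsClosed {p : ℝ × (Fin (r / 2) → ℝ) | (∑ t, p.2 t) ≤ 1} :=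
        isClosed_le hsumY continuous_const
      have hsumA : Continuous (fun p : ℝ × (Fin (r / 2) → ℝ) =>
          ∑ t : Fin (r / 2), (2 * ((t : ℕ) + 1) : ℝ) / (r : ℝ) * p.2 t) :=
        continuous_finset_sum _ fun t _ =>
          continuous_const.mul ((continuous_apply t).comp continuous_snd)
      have c4 : IsClosed {p : ℝ × (Fin (r / 2) → ℝ) |
          (∑ t : Fin (r / 2), (2 * ((t : ℕ) + 1) : ℝ) / (r : ℝ) * p.2 t) =
            (1 - ρ) * 0 + ρ * p.1} :=
        isClosed_eq hsumA (continuous_const.add (continuous_const.mul continuous_fst))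
      have c5 : IsClosed {p : ℝ × (Fin (r / 2) → ℝ) | δ ≤ ρ * p.1} :=
        isClosed_le continuous_const (continuous_const.mul continuous_fst)
      have : T = ({p : ℝ × (Fin (r / 2) → ℝ) | p.1 ∈ Set.Icc (0:ℝ) 1} ∩
          ({p | ∀ t, p.2 t ∈ Set.Icc (0:ℝ) 1} ∩
          ({p | (∑ t, p.2 t) ≤ 1} ∩
          ({p | (∑ t : Fin (r / 2), (2 * ((t : ℕ) + 1) : ℝ) / (r : ℝ) * p.2 t) =
              (1 - ρ) * 0 + ρ * p.1} ∩
           {p | δ ≤ ρ * p.1})))) := by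
        ext p
        simp only [hT, Set.mem_setOf_eq, Set.mem_inter_iff, memD]
        constructor
        · rintro ⟨⟨-, h2, h3, h4, h5⟩, h6⟩
          exact ⟨h2, h3, h4, h5, h6⟩
        · rintro ⟨h2, h3, h4, h5, h6⟩
          exact ⟨⟨Set.left_mem_Icc.2 zero_le_one, h2, h3, h4, h5⟩, h6⟩
      rw [this]
      exact c1.inter (c2.inter (c3.inter (c4.inter c5)))
    have hTsub : T ⊆ Set.Icc ((0 : ℝ), (0 : Fin (r / 2) → ℝ)) (1, 1) := by
      rintro ⟨xc, y⟩ ⟨⟨-, hxc, hy, -, -⟩, -⟩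
      constructor
      · exact ⟨hxc.1, fun t => (hy t).1⟩
      · exact ⟨hxc.2, fun t => (hy t).2⟩
    have hTc : IsCompact T := isCompact_Icc.of_isClosed_subset hTcl hTsub
    obtain ⟨p, hpT, hple⟩ := hTc.exists_isMaxOn hTne (fFun_cont l r ρ).continuousOn
    have hp1 : p.1 ≠ 0 := by
      intro h
      have := hpT.2
      rw [h, mul_zero] at this
      linarith
    have hneg : fFun l r 0 p.1 p.2 ρ < 0 := by
      have := hmax p.1 p.2 hpT.1 (fun h => hp1 h.1)
      rwa [f000] at this
    refine ⟨-(fFun l r 0 p.1 p.2 ρ), by linarith, fun xc y h1 h2 => ?_⟩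
    have := hple (show (xc, y) ∈ T from ⟨h1, h2⟩)
    simpa using this

/-- The leading exponent of the loop series for the BEC:
`α^BEC(ρ,η) = max_{(0,x_c,y) ∈ D(ρ)} [f(0,x_c,y,ρ) - 2η ρ x_c]`, the maximum
(formalized as a supremum) running over the points of the compact domain
`D(ρ)` whose first coordinate is `x₀ = 0`. -/
def alphaBEC (l r : ℕ) (ρ η : ℝ) : ℝ :=
  sSup {z : ℝ | ∃ (xc : ℝ) (y : Fin (r / 2) → ℝ), memD r ρ 0 xc y ∧
    z = fFun l r 0 xc y ρ - 2 * η * (ρ * xc)}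

/-- **Lemma 1 (BEC case).**  If for `η = 0` the maximum of the loop-series
exponent over the slice `{(0,x_c,y) ∈ D(ρ)}` is achieved only at
`(0, x_c, y) = (0,0,0)`, then there exists `η̃ < 0` such that
`α^BEC(ρ,η) = 0` for all `η > η̃`. -/
theorem alphaBEC_eq_zero_near_zero (l r : ℕ) (hl : 3 ≤ l) (hlr : l < r)
    (ρ : ℝ) (hρ : ρ ∈ Set.Icc (0 : ℝ) 1)
    (hmax : ∀ (xc : ℝ) (y : Fin (r / 2) → ℝ), memD r ρ 0 xc y →
      ¬(xc = 0 ∧ y = 0) → fFun l r 0 xc y ρ < fFun l r 0 0 0 ρ) :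
    ∃ ηt : ℝ, ηt < 0 ∧ ∀ η : ℝ, ηt < η → alphaBEC l r ρ η = 0 := by
  obtain ⟨hρ0, hρ1⟩ := hρ
  have hmemD0 : memD r ρ 0 0 0 := by
    refine ⟨Set.left_mem_Icc.2 zero_le_one, Set.left_mem_Icc.2 zero_le_one,
      fun t => Set.left_mem_Icc.2 zero_le_one, by simp, by simp⟩
  rcases eq_or_lt_of_le hρ0 with hρz | hρpos
  · exfalso
    have hmem1 : memD r ρ 0 1 0 := by
      refine ⟨Set.left_mem_Icc.2 zero_le_one, Set.right_mem_Icc.2 zero_le_one,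
        fun t => Set.left_mem_Icc.2 zero_le_one, by simp, by simp [← hρz]⟩
    have h := hmax 1 0 hmem1 (by norm_num)
    rw [f000] at h
    have e1 : fFun l r 0 1 0 ρ = 0 := by
      rw [← hρz] at *
      simp [fFun, h2]
    rw [e1] at h
    exact lt_irrefl 0 h
  · have hC0 := C0_pos l r
    set s₀ := Real.exp (-(4 * C0 l r)) with hs₀
    have hs₀pos : 0 < s₀ := Real.exp_pos _
    obtain ⟨m, hm, hreg2⟩ := region2 l r ρ hρ0 hρ1 s₀ hs₀pos hmax
    refine ⟨-(min (C0 l r) m) / 2, by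
      have : 0 < min (C0 l r) m := lt_min hC0 hm
      linarith, fun η hη => ?_⟩
    have hη2 : -(min (C0 l r) m) < 2 * η := by linarith
    unfold alphaBEC
    have hmemE0 : (0 : ℝ) ∈ {z : ℝ | ∃ (xc : ℝ) (y : Fin (r / 2) → ℝ),
        memD r ρ 0 xc y ∧ z = fFun l r 0 xc y ρ - 2 * η * (ρ * xc)} :=
      ⟨0, 0, hmemD0, by rw [f000]; ring⟩
    have hub : ∀ z ∈ {z : ℝ | ∃ (xc : ℝ) (y : Fin (r / 2) → ℝ),
        memD r ρ 0 xc y ∧ z = fFun l r 0 xc y ρ - 2 * η * (ρ * xc)}, z ≤ 0 := by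
      rintro z ⟨xc, y, hD, rfl⟩
      have hxc := hD.2.1
      have hρxc0 : 0 ≤ ρ * xc := mul_nonneg hρ0 hxc.1
      have hρxc1 : ρ * xc ≤ 1 := by nlinarith [hxc.1, hxc.2]
      rcases le_or_gt (ρ * xc) s₀ with hsmall | hbig
      · have hf := f_small l r hl hlr ρ xc y hρpos hρ1 hD hsmall
        have hη' : -(C0 l r) ≤ 2 * η := by
          have := min_le_left (C0 l r) m
          linarith
        have hmul := mul_le_mul_of_nonneg_right hη' hρxc0
        linarith
      · have hf := hreg2 xc y hD hbig.le
        have hη'' : -m ≤ 2 * η := by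
          have := min_le_right (C0 l r) m
          linarith
        rcases le_or_gt 0 η with hpos | hneg
        · have : 0 ≤ 2 * η * (ρ * xc) := by positivity
          linarith
        · have h1 : 2 * η * (ρ * xc) ≥ 2 * η := by nlinarith
          linarith
    exact le_antisymm (csSup_le ⟨0, hmemE0⟩ hub) (le_csSup ⟨0, hub⟩ hmemE0)
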